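/- For L > 1, F > 0 fixed, the steady and oscillatory thresholds R_S²(C²) = F + C² and R_O²(C²) = F(1+1/L) + C²/L satisfy: min(R_S², R_O²) = R_S² for C² ≤ F/(L−1) and min(R_S², R_O²) = R_O² for C² ≥ F/(L−1); moreover the onset threshold min(R_S², R_O²) is a continuous, piecewise-affine, strictly increasing and concave function of C². -/

import Mathlib

/-- The physically relevant onset threshold `min(R_S², R_O²)`: it equals the steady
threshold for `C² ≤ F/(L−1)` and the oscillatory one for `C² ≥ F/(L−1)`, and is a
continuous, strictly increasing, concave (piecewise-affine) function of `C²`. -/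
theorem onset_threshold_structure
    (F L : ℝ) (hF : 0 < F) (hL : 1 < L) :
    (∀ C2 : ℝ, C2 ≤ F / (L - 1) →
        min (F + C2) (F * (1 + 1 / L) + C2 / L) = F + C2)
      ∧ (∀ C2 : ℝ, F / (L - 1) ≤ C2 →
          min (F + C2) (F * (1 + 1 / L) + C2 / L) = F * (1 + 1 / L) + C2 / L)
      ∧ Continuous (fun C2 : ℝ => min (F + C2) (F * (1 + 1 / L) + C2 / L))
      ∧ StrictMono (fun C2 : ℝ => min (F + C2) (F * (1 + 1 / L) + C2 / L))
      ∧ ConcaveOn ℝ Set.univ (fun C2 : ℝ => min (F + C2) (F * (1 + 1 / L) + C2 / L)) := by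
  have hL0 : 0 < L := lt_trans one_pos hL
  have hL1 : 0 < L - 1 := by linarith
  refine ⟨?_, ?_, ?_, ?_, ?_⟩
  · intro C2 h
    have h' : C2 * (L - 1) ≤ F := (le_div_iff₀ hL1).mp h
    have key : C2 * (L - 1) / L ≤ F / L := by gcongr
    have e1 : C2 * (L - 1) / L = C2 - C2 / L := by field_simp
    have e2 : F * (1 + 1 / L) = F + F / L := by ring
    apply min_eq_left; rw [e2]; linarith
  · intro C2 h
    have h' : F ≤ C2 * (L - 1) := (div_le_iff₀ hL1).mp h
    have key : F / L ≤ C2 * (L - 1) / L := by gcongr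
    have e1 : C2 * (L - 1) / L = C2 - C2 / L := by field_simp
    have e2 : F * (1 + 1 / L) = F + F / L := by ring
    apply min_eq_right; rw [e2]; linarith
  · exact ((continuous_const.add continuous_id).min
      (continuous_const.add (continuous_id.div_const L)))
  · intro x y hxy
    have h1 : F + x < F + y := by linarith
    have h2 : F * (1 + 1 / L) + x / L < F * (1 + 1 / L) + y / L := by
      have : x / L < y / L := div_lt_div_of_pos_right hxy hL0
      linarith
    exact lt_min (lt_of_le_of_lt (min_le_left _ _) h1)
      (lt_of_le_of_lt (min_le_right _ _) h2)
  · have c1 : ConcaveOn ℝ Set.univ (fun C2 : ℝ => F + C2) :=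
      (concaveOn_const F convex_univ).add (concaveOn_id convex_univ)
    have c2 : ConcaveOn ℝ Set.univ (fun C2 : ℝ => F * (1 + 1 / L) + C2 / L) := by
      have h := (concaveOn_const (F * (1 + 1 / L)) (convex_univ (𝕜 := ℝ) (E := ℝ))).add
        ((concaveOn_id convex_univ).smul (le_of_lt (inv_pos.mpr hL0)))
      simpa [smul_eq_mul, div_eq_inv_mul, funext_iff, Pi.add_def] using h
    exact c1.inf c2
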